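/- For w_0 > 1 and integers 1 ≤ j ≤ s−2, the abscissae c_j = w_1 b_j T_j′(w_0), with b_j = 1/(1 + T_j(w_0)) and w_1 > 0, form a strictly increasing sequence: c_{j−1} < c_j for all such j. Equivalently, the function j ↦ T_j′(w_0)/(1 + T_j(w_0)) is strictly increasing in j for w_0 > 1. -/

import Mathlib

open Real

/-- Chebyshev polynomial of the first kind, as a real function. -/
noncomputable def chebT : ℕ → ℝ → ℝ
  | 0, _ => 1
  | 1, x => x
  | (n+2), x => 2 * x * chebT (n+1) x - chebT n x

lemma chebT_eq : ∀ (n : ℕ) (x : ℝ), chebT n x = (Polynomial.Chebyshev.T ℝ n).eval x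
  | 0, x => by simp [chebT, Polynomial.Chebyshev.T_zero]
  | 1, x => by simp [chebT, Polynomial.Chebyshev.T_one]
  | (n+2), x => by
      rw [chebT, chebT_eq (n+1), chebT_eq n]
      have h : ((n:ℤ)+1+1) = (n:ℤ)+2 := by ring
      rw [show ((n+2 : ℕ) : ℤ) = (n:ℤ)+2 by push_cast; ring,
        Polynomial.Chebyshev.T_add_two]
      push_cast
      simp [Polynomial.eval_mul, Polynomial.eval_sub]

lemma T_cosh_eval (n : ℤ) (t : ℝ) :
    (Polynomial.Chebyshev.T ℝ n).eval (Real.cosh t) = Real.cosh (n * t) := by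
  have := Polynomial.Chebyshev.complex_ofReal_eval_T (Real.cosh t) n
  have h2 : ((Real.cosh t : ℝ) : ℂ) = Complex.cos ((t : ℂ) * Complex.I) := by
    rw [Complex.cos_mul_I, Complex.ofReal_cosh]
  rw [h2] at this
  rw [Polynomial.Chebyshev.T_complex_cos] at this
  have h3 : (n : ℂ) * ((t : ℂ) * Complex.I) = (((n : ℝ) * t : ℝ) : ℂ) * Complex.I := by
    push_cast; ring
  rw [h3, Complex.cos_mul_I, ← Complex.ofReal_cosh] at this
  exact_mod_cast this

lemma U_cosh_eval (n : ℤ) (t : ℝ) :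
    (Polynomial.Chebyshev.U ℝ n).eval (Real.cosh t) * Real.sinh t
      = Real.sinh ((n + 1) * t) := by
  have := Polynomial.Chebyshev.U_complex_cos ((t : ℂ) * Complex.I) n
  rw [Complex.cos_mul_I, Complex.sin_mul_I, ← Complex.ofReal_cosh,
    ← Polynomial.Chebyshev.complex_ofReal_eval_U] at this
  have h3 : ((n : ℂ) + 1) * ((t : ℂ) * Complex.I) = (((n + 1 : ℤ) : ℝ) * t : ℝ) * Complex.I := by
    push_cast; ring
  rw [h3, Complex.sin_mul_I, ← Complex.ofReal_sinh, ← Complex.ofReal_sinh,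
    ← mul_assoc] at this
  have h4 := mul_right_cancel₀ Complex.I_ne_zero this
  have h5 : (Polynomial.Chebyshev.U ℝ n).eval (Real.cosh t) * Real.sinh t
      = Real.sinh (((n + 1 : ℤ) : ℝ) * t) := by exact_mod_cast h4
  rw [h5]; norm_num

lemma tanh_strictMonoOn : StrictMono Real.tanh := by
  intro x y hxy
  rw [Real.tanh_eq_sinh_div_cosh, Real.tanh_eq_sinh_div_cosh,
    div_lt_div_iff₀ (Real.cosh_pos x) (Real.cosh_pos y)]
  have h : Real.sinh (x - y) < 0 := by
    rw [Real.sinh_neg_iff]; linarith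
  rw [Real.sinh_sub] at h
  linarith

lemma half_ratio (x : ℝ) :
    Real.sinh x / (1 + Real.cosh x) = Real.tanh (x / 2) := by
  have hs : Real.sinh x = 2 * Real.sinh (x/2) * Real.cosh (x/2) := by
    rw [← Real.sinh_two_mul]; ring_nf
  have hc : 1 + Real.cosh x = 2 * Real.cosh (x/2) ^ 2 := by
    have := Real.cosh_two_mul (x/2)
    have h2 : Real.cosh (x/2) ^ 2 = Real.sinh (x/2) ^ 2 + 1 := Real.cosh_sq (x/2)
    have h3 : (2 : ℝ) * (x/2) = x := by ring
    rw [h3] at this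
    linarith
  rw [hs, hc, Real.tanh_eq_sinh_div_cosh]
  have hpos : Real.cosh (x/2) ≠ 0 := (Real.cosh_pos _).ne'
  field_simp

theorem stmt7 (s j : ℕ) (hj1 : 1 ≤ j) (hjs : j ≤ s - 2) (w0 w1 : ℝ)
    (hw0 : 1 < w0) (hw1 : 0 < w1) :
    let c : ℕ → ℝ := fun k => w1 * (1 / (1 + chebT k w0)) * deriv (chebT k) w0
    c (j-1) < c j := by
  intro c
  -- find t > 0 with cosh t = w0
  obtain ⟨t, ht0, htc⟩ : ∃ t : ℝ, 0 < t ∧ Real.cosh t = w0 := by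
    have h1 : (0:ℝ) < w0 ^ 2 - 1 := by nlinarith
    refine ⟨Real.arsinh (Real.sqrt (w0 ^ 2 - 1)), ?_, ?_⟩
    · rw [Real.arsinh_pos_iff]; positivity
    · rw [Real.cosh_arsinh, Real.sq_sqrt h1.le]
      rw [show (1 : ℝ) + (w0 ^ 2 - 1) = w0 ^ 2 by ring, Real.sqrt_sq (by linarith)]
  have hst : 0 < Real.sinh t := Real.sinh_pos_iff.mpr ht0
  -- formulas for chebT and its derivative
  have hT : ∀ k : ℕ, chebT k w0 = Real.cosh (k * t) := by
    intro k
    rw [chebT_eq, ← htc, T_cosh_eval]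
    norm_num
  have hderiv : ∀ k : ℕ, deriv (chebT k) w0 = (k : ℝ) * Real.sinh (k * t) / Real.sinh t := by
    intro k
    have hfun : chebT k = fun x => (Polynomial.Chebyshev.T ℝ k).eval x := by
      funext x; exact chebT_eq k x
    rw [hfun, Polynomial.deriv, Polynomial.Chebyshev.T_derivative_eq_U]
    rw [← htc]
    have hU := U_cosh_eval ((k : ℤ) - 1) t
    have hU' : (Polynomial.Chebyshev.U ℝ ((k:ℤ) - 1)).eval (Real.cosh t)
        = Real.sinh ((k : ℝ) * t) / Real.sinh t := by
      rw [eq_div_iff hst.ne']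
      rw [hU]; norm_num
    simp only [Polynomial.eval_mul, Polynomial.eval_intCast]
    rw [hU']
    push_cast
    ring
  -- reduce to tanh statement
  obtain ⟨n, rfl⟩ : ∃ n : ℕ, j = n + 1 := ⟨j - 1, (Nat.succ_pred_eq_of_pos hj1).symm⟩
  have hsimp : ∀ k : ℕ, c k = w1 / Real.sinh t * ((k : ℝ) * Real.tanh ((k : ℝ) * t / 2)) := by
    intro k
    show w1 * (1 / (1 + chebT k w0)) * deriv (chebT k) w0 = _
    rw [hT, hderiv, ← half_ratio]
    have hpos : (1 : ℝ) + Real.cosh ((k:ℝ) * t) ≠ 0 := by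
      have := Real.cosh_pos ((k:ℝ) * t); positivity
    field_simp
  have hn1 : (n + 1 : ℕ) - 1 = n := rfl
  rw [hn1, hsimp, hsimp]
  have hfac : 0 < w1 / Real.sinh t := div_pos hw1 hst
  apply mul_lt_mul_of_pos_left _ hfac
  -- n * tanh(n t / 2) < (n+1) * tanh((n+1) t / 2)
  have htmono : Real.tanh ((n : ℝ) * t / 2) ≤ Real.tanh (((n:ℝ)+1) * t / 2) := by
    apply tanh_strictMonoOn.monotone
    have : (0:ℝ) ≤ (n:ℝ) := Nat.cast_nonneg n
    nlinarith
  have htnn : 0 ≤ Real.tanh ((n : ℝ) * t / 2) := by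
    rw [Real.tanh_eq_sinh_div_cosh]
    apply div_nonneg _ (Real.cosh_pos _).le
    rw [Real.sinh_nonneg_iff]
    positivity
  have htpos : 0 < Real.tanh (((n:ℝ)+1) * t / 2) := by
    rw [Real.tanh_eq_sinh_div_cosh]
    apply div_pos _ (Real.cosh_pos _)
    rw [Real.sinh_pos_iff]
    have : (0:ℝ) ≤ (n:ℝ) := Nat.cast_nonneg n
    nlinarith
  push_cast
  calc (n:ℝ) * Real.tanh ((n : ℝ) * t / 2)
      ≤ (n:ℝ) * Real.tanh (((n:ℝ)+1) * t / 2) := by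
        apply mul_le_mul_of_nonneg_left htmono (Nat.cast_nonneg n)
    _ < ((n:ℝ)+1) * Real.tanh (((n:ℝ)+1) * t / 2) := by nlinarith
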